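/- arXiv:1708.00125 — 3 statements merged into one kernel-verified Lean document; each statement's English description precedes it below -/
import Mathlib

section
/- The 5-block graph G formed from vertex-disjoint graphs H_1,...,H_5 of clique number at most k by adding all edges between pairs of blocks E(1,3), E(1,5), E(2,4), E(2,5), E(3,4) is K_{2k+1}-free. -/
open SimpleGraph

/-- `Copies G F S`: `G` contains a copy of `F` all of whose vertices lie in `S`. -/
def Copies {α β : Type*} (G : SimpleGraph α) (F : SimpleGraph β) (S : Set α) : Prop :=
  ∃ f : β ↪ α, (∀ a b, F.Adj a b → G.Adj (f a) (f b)) ∧ ∀ a, f a ∈ S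

/-- `G` vertex-arrows the family `F` of graphs. -/
def VArrows {α : Type*} (G : SimpleGraph α) {r : ℕ} {β : Fin r → Type*}
    (F : ∀ i, SimpleGraph (β i)) : Prop :=
  ∀ C : α → Fin r, ∃ i, Copies G (F i) {v | C v = i}

/-- `G` vertex-arrows `(F1, F2)`. -/
def VArrows2 {α β γ : Type*} (G : SimpleGraph α) (F1 : SimpleGraph β) (F2 : SimpleGraph γ) :
    Prop :=
  ∀ C : α → Bool, Copies G F1 {v | C v = true} ∨ Copies G F2 {v | C v = false}

/-- `G` edge-arrows `(F1, F2)`: every red subgraph `R ≤ G` yields a red `F1` or a blue `F2`. -/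
def EArrows2 {α β γ : Type*} (G : SimpleGraph α) (F1 : SimpleGraph β) (F2 : SimpleGraph γ) :
    Prop :=
  ∀ R : SimpleGraph α, R ≤ G → Copies R F1 Set.univ ∨ Copies (G \ R) F2 Set.univ

/-- Vertex Folkman number for a family of target graphs. -/
noncomputable def Fv {r : ℕ} {β : Fin r → Type*} (F : ∀ i, SimpleGraph (β i)) (k : ℕ) : ℕ :=
  sInf {n | ∃ G : SimpleGraph (Fin n), G.CliqueFree k ∧ VArrows G F}

/-- Two-color vertex Folkman number. -/
noncomputable def Fv2 {β γ : Type*} (F1 : SimpleGraph β) (F2 : SimpleGraph γ) (k : ℕ) : ℕ :=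
  sInf {n | ∃ G : SimpleGraph (Fin n), G.CliqueFree k ∧ VArrows2 G F1 F2}

/-- Two-color edge Folkman number. -/
noncomputable def Fe2 {β γ : Type*} (F1 : SimpleGraph β) (F2 : SimpleGraph γ) (k : ℕ) : ℕ :=
  sInf {n | ∃ G : SimpleGraph (Fin n), G.CliqueFree k ∧ EArrows2 G F1 F2}

/-- Lexicographic product `G[H]`. -/
def lexProd {α β : Type*} (G : SimpleGraph α) (H : SimpleGraph β) : SimpleGraph (α × β) where
  Adj x y := G.Adj x.1 y.1 ∨ (x.1 = y.1 ∧ H.Adj x.2 y.2)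
  symm := by constructor; rintro x y (h | ⟨e, h⟩); exacts [Or.inl h.symm, Or.inr ⟨e.symm, h.symm⟩]
  loopless := by constructor; rintro x (h | ⟨_, h⟩); exacts [G.loopless.irrefl _ h, H.loopless.irrefl _ h]

/-- Complete graph on `k` vertices. -/
def Kc (k : ℕ) : SimpleGraph (Fin k) := completeGraph (Fin k)

/-- `J_k = K_k - e`: complete graph on `k` vertices minus one edge (the one
joining the two distinguished right-hand vertices). -/
def Jgraph (k : ℕ) : SimpleGraph (Fin (k - 2) ⊕ Fin 2) where
  Adj x y := x ≠ y ∧ ¬(x.isRight ∧ y.isRight)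
  symm := ⟨fun x y ⟨h1, h2⟩ => ⟨h1.symm, fun ⟨a, b⟩ => h2 ⟨b, a⟩⟩⟩
  loopless := ⟨fun x h => h.1 rfl⟩

/-- Cycle on `n` vertices. -/
def cycle (n : ℕ) : SimpleGraph (ZMod n) where
  Adj i j := i ≠ j ∧ (i - j = 1 ∨ j - i = 1)
  symm := ⟨fun i j ⟨h1, h2⟩ => ⟨h1.symm, h2.symm⟩⟩
  loopless := ⟨fun i h => h.1 rfl⟩

/-- Join of two graphs: disjoint union plus all cross edges. -/
def graphJoin {α β : Type*} (G : SimpleGraph α) (H : SimpleGraph β) :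
    SimpleGraph (α ⊕ β) where
  Adj x y := (∃ a b, x = .inl a ∧ y = .inl b ∧ G.Adj a b) ∨
             (∃ a b, x = .inr a ∧ y = .inr b ∧ H.Adj a b) ∨
             (x.isLeft ∧ y.isRight) ∨ (x.isRight ∧ y.isLeft)
  symm := by
    constructor
    rintro x y (⟨a, b, rfl, rfl, h⟩ | ⟨a, b, rfl, rfl, h⟩ | ⟨h1, h2⟩ | ⟨h1, h2⟩)
    · exact Or.inl ⟨b, a, rfl, rfl, h.symm⟩
    · exact Or.inr (Or.inl ⟨b, a, rfl, rfl, h.symm⟩)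
    · exact Or.inr (Or.inr (Or.inr ⟨h2, h1⟩))
    · exact Or.inr (Or.inr (Or.inl ⟨h2, h1⟩))
  loopless := by
    constructor
    rintro x (⟨a, b, rfl, h, h'⟩ | ⟨a, b, rfl, h, h'⟩ | ⟨h1, h2⟩ | ⟨h1, h2⟩)
    · cases h; exact G.loopless.irrefl _ h'
    · cases h; exact H.loopless.irrefl _ h'
    · cases x <;> simp_all
    · cases x <;> simp_all

/-- Clique number: the largest size of a clique. -/
noncomputable def cliqueNum' {α : Type*} (G : SimpleGraph α) : ℕ :=
  sSup {n | ∃ s : Finset α, G.IsNClique n s}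


/-- The block pairs `(1,3),(1,5),(2,4),(2,5),(3,4)` (1-indexed), symmetrized. -/
def blockAdj (i j : Fin 5) : Prop :=
  (i.val + 1, j.val + 1) ∈
    [(1,3),(3,1),(1,5),(5,1),(2,4),(4,2),(2,5),(5,2),(3,4),(4,3)]

instance : DecidableRel blockAdj := fun i j => by unfold blockAdj; infer_instance

lemma blockAdj_symm : ∀ i j : Fin 5, blockAdj i j → blockAdj j i := by decide

lemma blockAdj_irrefl : ∀ i : Fin 5, ¬ blockAdj i i := by decide

/-- The 5-block graph: disjoint copies of `H 1, …, H 5` with complete joins between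
the block pairs `(1,3),(1,5),(2,4),(2,5),(3,4)`. -/
def fiveBlock {V : Fin 5 → Type*} (H : ∀ i, SimpleGraph (V i)) :
    SimpleGraph (Σ i, V i) where
  Adj x y := (∃ i a b, (H i).Adj a b ∧ x = ⟨i, a⟩ ∧ y = ⟨i, b⟩) ∨ blockAdj x.1 y.1
  symm := by
    constructor
    rintro x y (⟨i, a, b, hab, rfl, rfl⟩ | h)
    · exact Or.inl ⟨i, b, a, hab.symm, rfl, rfl⟩
    · exact Or.inr (blockAdj_symm _ _ h)
  loopless := by
    constructor
    rintro ⟨i, v⟩ (⟨j, a, b, hab, h1, h2⟩ | h)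
    · obtain ⟨rfl, h1'⟩ := Sigma.mk.inj_iff.mp h1
      obtain ⟨-, h2'⟩ := Sigma.mk.inj_iff.mp h2
      rw [← eq_of_heq h1', ← eq_of_heq h2'] at hab
      exact (H _).loopless.irrefl _ hab
    · exact blockAdj_irrefl _ h

/-- The 5-block graph formed from blocks of clique number at most `k` joined along
the pairs `(1,3),(1,5),(2,4),(2,5),(3,4)` is `K_{2k+1}`-free. -/
theorem fiveBlock_cliqueFree {V : Fin 5 → Type*} (H : ∀ i, SimpleGraph (V i)) (k : ℕ)
    (hH : ∀ i, (H i).CliqueFree (k + 1)) :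
    (fiveBlock H).CliqueFree (2 * k + 1) := by
  classical
  intro s hs
  set I := s.image Sigma.fst with hIdef
  -- each fiber has at most k vertices
  have hfib : ∀ i : Fin 5, (s.filter (fun x => x.1 = i)).card ≤ k := by
    intro i
    by_contra hcon
    push_neg at hcon
    set t := s.filter (fun x => x.1 = i) with htdef
    -- build clique in H i
    have hmem : ∀ x ∈ t, x.1 = i := fun x hx => (Finset.mem_filter.mp hx).2
    set u : Finset (V i) := t.attach.image
      (fun x => cast (congrArg V (hmem x.1 x.2)) x.1.2) with hudef
    have hinj : ∀ x ∈ t.attach, ∀ y ∈ t.attach,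
        cast (congrArg V (hmem x.1 x.2)) x.1.2 = cast (congrArg V (hmem y.1 y.2)) y.1.2
        → x = y := by
      rintro ⟨⟨jx, vx⟩, hx⟩ - ⟨⟨jy, vy⟩, hy⟩ - h
      have hjx : jx = i := hmem _ hx
      have hjy : jy = i := hmem _ hy
      subst hjx; subst hjy
      simp only [cast_eq] at h
      subst h; rfl
    have hucard : u.card = t.card := by
      rw [hudef, Finset.card_image_of_injOn hinj, Finset.card_attach]
    have huclique : (H i).IsClique u := by
      rintro a ha b hb hab
      rw [Finset.mem_coe, hudef, Finset.mem_image] at ha hb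
      obtain ⟨⟨x, hx⟩, -, rfl⟩ := ha
      obtain ⟨⟨y, hy⟩, -, rfl⟩ := hb
      have hxs : x ∈ s := (Finset.mem_filter.mp hx).1
      have hys : y ∈ s := (Finset.mem_filter.mp hy).1
      have hxy : x ≠ y := by rintro rfl; exact hab rfl
      have hadj := hs.1 hxs hys hxy
      rcases hadj with ⟨j, p, q, hpq, rfl, rfl⟩ | hblk
      · have hji : j = i := hmem _ hx
        subst hji
        simpa using hpq
      · rw [hmem _ hx, hmem _ hy] at hblk
        exact absurd hblk (blockAdj_irrefl i)
    have : k + 1 ≤ u.card := by omega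
    obtain ⟨u', hu'sub, hu'card⟩ := Finset.exists_subset_card_eq this
    exact hH i u' ⟨huclique.subset hu'sub, hu'card⟩
  -- the set of blocks used has at most 2 elements
  have hblkpair : ∀ i ∈ I, ∀ j ∈ I, i ≠ j → blockAdj i j := by
    intro i hi j hj hij
    obtain ⟨x, hx, hxi⟩ := Finset.mem_image.mp hi
    obtain ⟨y, hy, hyj⟩ := Finset.mem_image.mp hj
    have hxy : x ≠ y := by rintro rfl; exact hij (hxi ▸ hyj)
    rcases hs.1 hx hy hxy with ⟨l, p, q, hpq, rfl, rfl⟩ | hblk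
    · exact absurd (hxi ▸ hyj) hij
    · rwa [hxi, hyj] at hblk
  have hI2 : I.card ≤ 2 := by
    by_contra hI3
    push_neg at hI3
    obtain ⟨t, hts, htc⟩ := Finset.exists_subset_card_eq hI3
    obtain ⟨a, b, c, hab, hac, hbc, rfl⟩ := Finset.card_eq_three.mp htc
    have ha : a ∈ I := hts (by simp)
    have hb : b ∈ I := hts (by simp)
    have hc : c ∈ I := hts (by simp)
    have h1 := hblkpair a ha b hb hab
    have h2 := hblkpair a ha c hc hac
    have h3 := hblkpair b hb c hc hbc
    have key : ∀ a b c : Fin 5, a ≠ b → a ≠ c → b ≠ c →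
        blockAdj a b → blockAdj a c → blockAdj b c → False := by decide
    exact key a b c hab hac hbc h1 h2 h3
  have hcount : s.card = ∑ i ∈ I, (s.filter (fun x => x.1 = i)).card :=
    Finset.card_eq_sum_card_fiberwise (fun x hx => Finset.mem_image_of_mem _ hx)
  have : s.card ≤ 2 * k := by
    rw [hcount]
    calc ∑ i ∈ I, (s.filter (fun x => x.1 = i)).card ≤ ∑ _i ∈ I, k :=
          Finset.sum_le_sum (fun i _ => hfib i)
      _ = I.card * k := by rw [Finset.sum_const, smul_eq_mul]
      _ ≤ 2 * k := Nat.mul_le_mul_right k hI2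
  rw [hs.2] at this
  omega
end

section
/- For every t ≥ 1, the lexicographic product C_5[E_{2t-1}] is triangle-free and vertex-arrows (K_{t,t}, K_{t,t}); hence F_v(K_{t,t}, K_{t,t}; K_3) ≤ 10t − 5. -/
open SimpleGraph

/- ------- auxiliary lemmas ------- -/

instance : DecidableRel (cycle 5).Adj := fun _ _ => by unfold cycle; infer_instance

lemma aux_c5_free : (cycle 5).CliqueFree 3 := by
  rw [cliqueFree_iff]
  constructor
  intro e
  have h01 : (cycle 5).Adj (e 0) (e 1) := e.toHom.map_adj (by decide)
  have h02 : (cycle 5).Adj (e 0) (e 2) := e.toHom.map_adj (by decide)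
  have h12 : (cycle 5).Adj (e 1) (e 2) := e.toHom.map_adj (by decide)
  revert h01 h02 h12
  generalize e 0 = a; generalize e 1 = b; generalize e 2 = c
  revert a b c
  decide

lemma aux_lex_free {α β : Type*} {G : SimpleGraph α} {n : ℕ} (h : G.CliqueFree n) :
    (lexProd G (⊥ : SimpleGraph β)).CliqueFree n := by
  rw [cliqueFree_iff] at h ⊢
  constructor
  intro e
  exact h.false
    { toHom := ⟨fun v => (e v).1, fun hab => by
          rcases e.toHom.map_adj hab with h' | ⟨_, h'⟩
          · exact h'
          · exact absurd h' (by simp)⟩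
      injective' := by
        intro a b hab
        by_contra hne
        have := e.toHom.map_adj (by simp [hne] : (⊤ : SimpleGraph (Fin n)).Adj a b)
        rcases this with h' | ⟨_, h'⟩
        · have hab' : (e.toHom a).1 = (e.toHom b).1 := hab
          rw [hab'] at h'
          exact G.loopless.irrefl _ h'
        · exact h' }

lemma aux_key : ∀ f : ZMod 5 → Bool, ∃ k : ZMod 5, f k = f (k + 1) := by decide

/-- Copies of `K_{t,t}` inside a color class. -/
lemma aux_copy {t : ℕ} (b : Bool) (C : ZMod 5 × Fin (2 * t - 1) → Bool) (k : ZMod 5)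
    (h1 : t ≤ (Finset.univ.filter fun j => C (k, j) = b).card)
    (h2 : t ≤ (Finset.univ.filter fun j => C (k + 1, j) = b).card) :
    Copies (lexProd (cycle 5) (⊥ : SimpleGraph (Fin (2 * t - 1))))
      (completeBipartiteGraph (Fin t) (Fin t)) {v | C v = b} := by
  obtain ⟨s1, hs1, hc1⟩ := Finset.exists_subset_card_eq h1
  obtain ⟨s2, hs2, hc2⟩ := Finset.exists_subset_card_eq h2
  have hk : k ≠ k + 1 := by
    intro h
    have := congrArg (fun x => x - k) h
    simp at this
    exact absurd this (by decide)
  have hadj : (cycle 5).Adj k (k + 1) := (⟨hk, Or.inr (by ring)⟩ : k ≠ k + 1 ∧ (k - (k + 1) = 1 ∨ k + 1 - k = 1))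
  refine ⟨⟨Sum.elim (fun a => (k, s1.orderEmbOfFin hc1 a))
      (fun a => (k + 1, s2.orderEmbOfFin hc2 a)), ?_⟩, ?_, ?_⟩
  · rintro (a | a) (c | c) h <;> simp only [Sum.elim_inl, Sum.elim_inr, Prod.mk.injEq] at h
    · exact congrArg Sum.inl ((s1.orderEmbOfFin hc1).injective (by exact_mod_cast h.2))
    · exact absurd h.1 hk
    · exact absurd h.1.symm hk
    · exact congrArg Sum.inr ((s2.orderEmbOfFin hc2).injective (by exact_mod_cast h.2))
  · rintro (a | a) (c | c) h <;> simp at h <;> simp only [Function.Embedding.coeFn_mk,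
      Sum.elim_inl, Sum.elim_inr, lexProd]
    · exact Or.inl hadj
    · exact Or.inl hadj.symm
  · rintro (a | a)
    · have := hs1 (Finset.orderEmbOfFin_mem s1 hc1 a)
      exact (Finset.mem_filter.1 this).2
    · have := hs2 (Finset.orderEmbOfFin_mem s2 hc2 a)
      exact (Finset.mem_filter.1 this).2

lemma aux_arrows (t : ℕ) (ht : 1 ≤ t) :
    VArrows2 (lexProd (cycle 5) (⊥ : SimpleGraph (Fin (2 * t - 1))))
      (completeBipartiteGraph (Fin t) (Fin t)) (completeBipartiteGraph (Fin t) (Fin t)) := by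
  intro C
  set m : ZMod 5 → Bool := fun i => decide (t ≤ (Finset.univ.filter fun j => C (i, j) = true).card)
    with hm
  have hmaj : ∀ i : ZMod 5, t ≤ (Finset.univ.filter fun j => C (i, j) = m i).card := by
    intro i
    by_cases h : t ≤ (Finset.univ.filter fun j => C (i, j) = true).card
    · simpa [hm, h] using h
    · have hsum := Finset.card_filter_add_card_filter_not
        (s := (Finset.univ : Finset (Fin (2 * t - 1)))) (p := fun j => C (i, j) = true)
      simp only [Finset.card_univ, Fintype.card_fin] at hsum
      have heq : (Finset.univ.filter fun j => ¬C (i, j) = true) =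
          (Finset.univ.filter fun j => C (i, j) = false) := by
        apply Finset.filter_congr; intro j _; simp
      rw [heq] at hsum
      have : t ≤ (Finset.univ.filter fun j => C (i, j) = false).card := by omega
      simpa [hm, h] using this
  obtain ⟨k, hk⟩ := aux_key m
  cases hb : m k with
  | true =>
      left
      exact aux_copy true C k (by rw [← hb]; exact hmaj k)
        (by rw [← hb, hk]; exact hmaj (k + 1))
  | false =>
      right
      exact aux_copy false C k (by rw [← hb]; exact hmaj k)
        (by rw [← hb, hk]; exact hmaj (k + 1))

/-- For `t ≥ 1`, `C_5[E_{2t-1}]` is triangle-free and vertex-arrows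
`(K_{t,t}, K_{t,t})`; hence `F_v(K_{t,t},K_{t,t};3) ≤ 10t − 5`. -/
theorem C5_blowup_arrows_Ktt (t : ℕ) (ht : 1 ≤ t) :
    (lexProd (cycle 5) (⊥ : SimpleGraph (Fin (2 * t - 1)))).CliqueFree 3 ∧
    VArrows2 (lexProd (cycle 5) (⊥ : SimpleGraph (Fin (2 * t - 1))))
      (completeBipartiteGraph (Fin t) (Fin t)) (completeBipartiteGraph (Fin t) (Fin t)) ∧
    Fv2 (completeBipartiteGraph (Fin t) (Fin t)) (completeBipartiteGraph (Fin t) (Fin t)) 3 ≤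
      10 * t - 5 := by
  have hfree := aux_lex_free (β := Fin (2 * t - 1)) aux_c5_free
  have harr := aux_arrows t ht
  refine ⟨hfree, harr, ?_⟩
  apply Nat.sInf_le
  have hcard : Fintype.card (ZMod 5 × Fin (2 * t - 1)) = 10 * t - 5 := by
    simp only [Fintype.card_prod, Fintype.card_fin, ZMod.card]
    omega
  obtain ⟨e⟩ := Fintype.truncEquivOfCardEq
    (α := Fin (10 * t - 5)) (β := ZMod 5 × Fin (2 * t - 1)) (by simp [hcard])
  set G := lexProd (cycle 5) (⊥ : SimpleGraph (Fin (2 * t - 1)))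
  refine ⟨G.comap e, ?_, ?_⟩
  · rw [cliqueFree_iff]
    constructor
    intro f
    rw [cliqueFree_iff] at hfree
    exact hfree.false ((SimpleGraph.Embedding.comap e.toEmbedding G).toCopy.comp f)
  · intro C'
    rcases harr (fun v => C' (e.symm v)) with ⟨f, hf1, hf2⟩ | ⟨f, hf1, hf2⟩
    · left
      refine ⟨f.trans e.symm.toEmbedding, ?_, ?_⟩
      · intro a b hab
        have := hf1 a b hab
        simpa [SimpleGraph.comap] using this
      · intro a
        have := hf2 a
        simpa using this
    · right
      refine ⟨f.trans e.symm.toEmbedding, ?_, ?_⟩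
      · intro a b hab
        have := hf1 a b hab
        simpa [SimpleGraph.comap] using this
      · intro a
        have := hf2 a
        simpa using this
end

section
/- Every 2-coloring of the edges of K_{1,2,2} (the complete tripartite graph with parts of sizes 1,2,2) contains a copy of J_3 = P_3 in color 1 or a triangle in color 2. That is, K_{1,2,2} edge-arrows (J_3, K_3). -/
open SimpleGraph

/-- A vertex with two distinct neighbors gives a copy of `J_3 = P_3`. -/
lemma copies_path {W : Type*} (H : SimpleGraph W) (x y z : W)
    (hxy : H.Adj x y) (hxz : H.Adj x z) (hyz : y ≠ z) :
    Copies H (Jgraph 3) Set.univ := by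
  refine ⟨⟨Sum.elim (fun _ : Fin 1 => x) ![y, z], ?_⟩, ?_, fun _ => trivial⟩
  · rintro (u | u) (v | v) h
    · exact congrArg Sum.inl (Fin.ext (by have := u.isLt; have := v.isLt; omega))
    · exfalso; fin_cases v <;> simp_all
    · exfalso; fin_cases u <;> simp_all
    · fin_cases u <;> fin_cases v <;> simp_all
  · rintro (u | u) (v | v) (⟨hne, hr⟩ : _ ≠ _ ∧ ¬(_ ∧ _))
    · exact absurd (congrArg Sum.inl (Fin.ext (by have := u.isLt; have := v.isLt; omega))) hne
    · fin_cases v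
      · exact hxy
      · exact hxz
    · fin_cases u
      · exact hxy.symm
      · exact hxz.symm
    · exact absurd ⟨rfl, rfl⟩ hr

/-- Three mutually adjacent vertices give a copy of `K_3`. -/
lemma copies_tri {W : Type*} (H : SimpleGraph W) (x y z : W)
    (hxy : H.Adj x y) (hxz : H.Adj x z) (hyz : H.Adj y z) :
    Copies H (Kc 3) Set.univ := by
  refine ⟨⟨![x, y, z], ?_⟩, ?_, fun _ => trivial⟩
  · intro i j h
    fin_cases i <;> fin_cases j <;> simp_all
  · intro i j hij
    have h1 := hxy.symm; have h2 := hxz.symm; have h3 := hyz.symm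
    fin_cases i <;> fin_cases j <;> simp_all [Kc, completeGraph] <;> assumption

lemma arrows_aux {W : Type*} (G R : SimpleGraph W) (p u w1 w2 : W)
    (hpu : G.Adj p u) (hpw1 : G.Adj p w1) (hpw2 : G.Adj p w2)
    (huw1 : G.Adj u w1) (huw2 : G.Adj u w2) (hw : w1 ≠ w2)
    (h1 : ¬R.Adj p u) (h2 : ¬R.Adj p w1) (h3 : ¬R.Adj p w2) :
    Copies R (Jgraph 3) Set.univ ∨ Copies (G \ R) (Kc 3) Set.univ := by
  by_cases hr1 : R.Adj u w1
  · by_cases hr2 : R.Adj u w2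
    · exact Or.inl (copies_path R u w1 w2 hr1 hr2 hw)
    · exact Or.inr (copies_tri (G \ R) p u w2 ⟨hpu, h1⟩ ⟨hpw2, h3⟩ ⟨huw2, hr2⟩)
  · exact Or.inr (copies_tri (G \ R) p u w1 ⟨hpu, h1⟩ ⟨hpw1, h2⟩ ⟨huw1, hr1⟩)

/-- `K_{1,2,2} → (J_3, K_3)^e`. -/
theorem K122_edge_arrows :
    EArrows2 (completeMultipartiteGraph (fun i : Fin 3 => Fin (![1, 2, 2] i)))
      (Jgraph 3) (Kc 3) := by
  intro R hR
  set G := completeMultipartiteGraph (fun i : Fin 3 => Fin (![1, 2, 2] i)) with hG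
  let a : Σ i : Fin 3, Fin (![1, 2, 2] i) := ⟨0, ⟨0, by norm_num⟩⟩
  let b0 : Σ i : Fin 3, Fin (![1, 2, 2] i) := ⟨1, ⟨0, by norm_num⟩⟩
  let b1 : Σ i : Fin 3, Fin (![1, 2, 2] i) := ⟨1, ⟨1, by norm_num⟩⟩
  let c0 : Σ i : Fin 3, Fin (![1, 2, 2] i) := ⟨2, ⟨0, by decide⟩⟩
  let c1 : Σ i : Fin 3, Fin (![1, 2, 2] i) := ⟨2, ⟨1, by decide⟩⟩
  have adj : ∀ x y : Σ i : Fin 3, Fin (![1, 2, 2] i), x.1 ≠ y.1 → G.Adj x y :=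
    fun x y h => h
  by_cases hab0 : R.Adj a b0
  · by_cases hab1 : R.Adj a b1
    · exact Or.inl (copies_path R a b0 b1 hab0 hab1 (by decide))
    · by_cases hac0 : R.Adj a c0
      · exact Or.inl (copies_path R a b0 c0 hab0 hac0 (by decide))
      · by_cases hac1 : R.Adj a c1
        · exact Or.inl (copies_path R a b0 c1 hab0 hac1 (by decide))
        · exact arrows_aux G R a b1 c0 c1 (adj _ _ (by decide)) (adj _ _ (by decide))
            (adj _ _ (by decide)) (adj _ _ (by decide)) (adj _ _ (by decide))
            (by decide) hab1 hac0 hac1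
  · by_cases hab1 : R.Adj a b1
    · by_cases hac0 : R.Adj a c0
      · exact Or.inl (copies_path R a b1 c0 hab1 hac0 (by decide))
      · by_cases hac1 : R.Adj a c1
        · exact Or.inl (copies_path R a b1 c1 hab1 hac1 (by decide))
        · exact arrows_aux G R a b0 c0 c1 (adj _ _ (by decide)) (adj _ _ (by decide))
            (adj _ _ (by decide)) (adj _ _ (by decide)) (adj _ _ (by decide))
            (by decide) hab0 hac0 hac1
    · by_cases hac0 : R.Adj a c0
      · by_cases hac1 : R.Adj a c1
        · exact Or.inl (copies_path R a c0 c1 hac0 hac1 (by decide))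
        · exact arrows_aux G R a c1 b0 b1 (adj _ _ (by decide)) (adj _ _ (by decide))
            (adj _ _ (by decide)) (adj _ _ (by decide)) (adj _ _ (by decide))
            (by decide) hac1 hab0 hab1
      · by_cases hac1 : R.Adj a c1
        · exact arrows_aux G R a c0 b0 b1 (adj _ _ (by decide)) (adj _ _ (by decide))
            (adj _ _ (by decide)) (adj _ _ (by decide)) (adj _ _ (by decide))
            (by decide) hac0 hab0 hab1
        · exact arrows_aux G R a b0 c0 c1 (adj _ _ (by decide)) (adj _ _ (by decide))
            (adj _ _ (by decide)) (adj _ _ (by decide)) (adj _ _ (by decide))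
            (by decide) hab0 hac0 hac1
end
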